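/- Let Φ: [0,T] × ℝ^P → ℝ^P satisfy: t ↦ Φ_t(θ) is L-Lipschitz in t uniformly in θ, each Φ_q (q ∈ [0,T]) maps Lebesgue-null sets to sets whose preimage has measure bounded by a constant J times the measure of the set, and let S ⊂ ℝ^P with λ^P(N_r(S)) = O(r^k) for some k ≥ 2. Then the set A = {θ : ∃ t ∈ [0,T], Φ_t(θ) ∈ S} has Lebesgue measure zero. -/

import Mathlib

open MeasureTheory

theorem flow_avoids_high_codimension_set
    {P k : ℕ} (hk : 2 ≤ k) {T : ℝ} (hT : 0 < T)
    (Φ : ℝ → EuclideanSpace ℝ (Fin P) → EuclideanSpace ℝ (Fin P))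
    (L : NNReal) (hL : 0 < L)
    (hLip : ∀ θ : EuclideanSpace ℝ (Fin P),
      LipschitzOnWith L (fun t => Φ t θ) (Set.Icc 0 T))
    (J : ℝ) (hJ : 0 < J)
    (hpre : ∀ q ∈ Set.Icc (0:ℝ) T, ∀ N : Set (EuclideanSpace ℝ (Fin P)),
      MeasurableSet N → volume (Φ q ⁻¹' N) ≤ ENNReal.ofReal J * volume N)
    (S : Set (EuclideanSpace ℝ (Fin P)))
    (C : ℝ) (hC : 0 < C) (r₀ : ℝ) (hr₀ : 0 < r₀)
    (hS : ∀ r ∈ Set.Ioo (0:ℝ) r₀,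
      volume (Metric.thickening r S) ≤ ENNReal.ofReal (C * r ^ k)) :
    volume {θ : EuclideanSpace ℝ (Fin P) | ∃ t ∈ Set.Icc (0:ℝ) T, Φ t θ ∈ S} = 0 := by
  set A := {θ : EuclideanSpace ℝ (Fin P) | ∃ t ∈ Set.Icc (0:ℝ) T, Φ t θ ∈ S} with hA
  have hL' : (0:ℝ) < (L:ℝ) := by exact_mod_cast hL
  set K : ℝ := J * C * (2 * T * L + 2) with hK
  have hK0 : 0 < K := by positivity
  -- Key estimate: volume A ≤ ofReal (K * r) for all small r
  have key : ∀ r : ℝ, r ∈ Set.Ioo 0 (min r₀ 1) →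
      volume A ≤ ENNReal.ofReal (K * r) := by
    rintro r ⟨hr0, hrlt⟩
    have hrr₀ : r < r₀ := lt_of_lt_of_le hrlt (min_le_left _ _)
    have hr1 : r ≤ 1 := le_of_lt (lt_of_lt_of_le hrlt (min_le_right _ _))
    set δ : ℝ := r / (2 * L) with hδdef
    have hδ0 : 0 < δ := by positivity
    set n : ℕ := ⌈T / δ⌉₊ with hn
    -- covering
    have cover : A ⊆ ⋃ i ∈ Finset.range (n + 1),
        Φ (min (i * δ) T) ⁻¹' (Metric.thickening r S) := by
      rintro θ ⟨t, ht, hts⟩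
      set i : ℕ := ⌊t / δ⌋₊ with hi
      have htδ0 : 0 ≤ t / δ := div_nonneg ht.1 hδ0.le
      have hiδ_le : (i : ℝ) * δ ≤ t := by
        have := Nat.floor_le htδ0
        calc (i : ℝ) * δ ≤ (t / δ) * δ := by
              exact mul_le_mul_of_nonneg_right this hδ0.le
          _ = t := by field_simp
      have ht_lt : t < ((i : ℝ) + 1) * δ := by
        have := Nat.lt_floor_add_one (t / δ)
        calc t = (t / δ) * δ := by field_simp
          _ < ((i : ℝ) + 1) * δ := by
              exact mul_lt_mul_of_pos_right this hδ0
      have hiT : (i : ℝ) * δ ≤ T := hiδ_le.trans ht.2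
      have hmin : min ((i : ℝ) * δ) T = (i : ℝ) * δ := min_eq_left hiT
      have hile : i ≤ n := by
        have h1 : i ≤ ⌈t / δ⌉₊ := Nat.floor_le_ceil _
        have h2 : ⌈t / δ⌉₊ ≤ n := Nat.ceil_le_ceil (by
          gcongr
          exact ht.2)
        exact h1.trans h2
      refine Set.mem_biUnion (Finset.mem_range.mpr (Nat.lt_succ_of_le hile)) ?_
      have hq_mem : (i : ℝ) * δ ∈ Set.Icc (0:ℝ) T :=
        ⟨by positivity, hiT⟩
      have hdist : dist (Φ ((i:ℝ) * δ) θ) (Φ t θ) < r := by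
        have h := (hLip θ).dist_le_mul ((i:ℝ) * δ) hq_mem t ht
        have hd : dist ((i:ℝ) * δ) t ≤ δ := by
          rw [Real.dist_eq, abs_le]
          constructor <;> nlinarith
        have : dist (Φ ((i:ℝ) * δ) θ) (Φ t θ) ≤ (L:ℝ) * δ := by
          calc dist (Φ ((i:ℝ) * δ) θ) (Φ t θ) ≤ (L:ℝ) * dist ((i:ℝ) * δ) t := h
            _ ≤ (L:ℝ) * δ := mul_le_mul_of_nonneg_left hd hL'.le
        have hLδ : (L:ℝ) * δ = r / 2 := by
          rw [hδdef]; field_simp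
        nlinarith
      simp only [Set.mem_preimage, hmin]
      exact Metric.mem_thickening_iff.mpr ⟨Φ t θ, hts, hdist⟩
    -- measure bound for each piece
    have piece : ∀ i : ℕ, i ∈ Finset.range (n + 1) →
        volume (Φ (min ((i:ℝ) * δ) T) ⁻¹' (Metric.thickening r S)) ≤
          ENNReal.ofReal (J * (C * r ^ k)) := by
      intro i _
      have hq : min ((i:ℝ) * δ) T ∈ Set.Icc (0:ℝ) T :=
        ⟨le_min (by positivity) hT.le, min_le_right _ _⟩
      calc volume (Φ (min ((i:ℝ) * δ) T) ⁻¹' (Metric.thickening r S))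
          ≤ ENNReal.ofReal J * volume (Metric.thickening r S) :=
            hpre _ hq _ Metric.isOpen_thickening.measurableSet
        _ ≤ ENNReal.ofReal J * ENNReal.ofReal (C * r ^ k) := by
            exact mul_le_mul_right (hS r ⟨hr0, hrr₀⟩) _
        _ = ENNReal.ofReal (J * (C * r ^ k)) := by
            rw [← ENNReal.ofReal_mul hJ.le]
    have hcount : ((n:ℝ) + 1) ≤ (2 * T * L + 2) / r := by
      have h1 : (n : ℝ) < T / δ + 1 := Nat.ceil_lt_add_one (by positivity)
      have h2 : T / δ = 2 * T * L / r := by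
        rw [hδdef]; field_simp
      have h3 : (2:ℝ) ≤ 2 / r := by
        rw [le_div_iff₀ hr0]; nlinarith
      have h4 : 2 * T * L / r + 2 / r = (2 * T * L + 2) / r := by ring
      nlinarith [div_nonneg (by positivity : (0:ℝ) ≤ 2 * T * L) hr0.le]
    have hrk : r ^ k ≤ r * r := by
      have : r ^ k ≤ r ^ 2 := pow_le_pow_of_le_one hr0.le hr1 hk
      calc r ^ k ≤ r ^ 2 := this
        _ = r * r := sq r
    calc volume A
        ≤ volume (⋃ i ∈ Finset.range (n + 1),
            Φ (min ((i:ℝ) * δ) T) ⁻¹' (Metric.thickening r S)) := by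
          exact measure_mono (by exact_mod_cast cover)
      _ ≤ ∑ i ∈ Finset.range (n + 1),
            volume (Φ (min ((i:ℝ) * δ) T) ⁻¹' (Metric.thickening r S)) :=
          measure_biUnion_finset_le _ _
      _ ≤ ∑ _i ∈ Finset.range (n + 1), ENNReal.ofReal (J * (C * r ^ k)) :=
          Finset.sum_le_sum piece
      _ = (n + 1 : ℕ) * ENNReal.ofReal (J * (C * r ^ k)) := by
          rw [Finset.sum_const, Finset.card_range, nsmul_eq_mul]
      _ = ENNReal.ofReal ((n + 1 : ℕ) : ℝ) * ENNReal.ofReal (J * (C * r ^ k)) := by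
          rw [ENNReal.ofReal_natCast]
      _ = ENNReal.ofReal (((n + 1 : ℕ) : ℝ) * (J * (C * r ^ k))) := by
          rw [← ENNReal.ofReal_mul (by positivity)]
      _ ≤ ENNReal.ofReal (K * r) := by
          apply ENNReal.ofReal_le_ofReal
          push_cast
          have hstep : ((n:ℝ) + 1) * (J * (C * r ^ k)) ≤
              ((2 * T * L + 2) / r) * (J * (C * r ^ k)) := by
            apply mul_le_mul_of_nonneg_right hcount (by positivity)
          refine hstep.trans ?_
          rw [hK]
          rw [div_mul_eq_mul_div, div_le_iff₀ hr0]
          have h5 : 0 ≤ (2 * T * (L:ℝ) + 2) * (J * C) := by positivity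
          calc (2 * T * (L:ℝ) + 2) * (J * (C * r ^ k))
              = ((2 * T * (L:ℝ) + 2) * (J * C)) * r ^ k := by ring
            _ ≤ ((2 * T * (L:ℝ) + 2) * (J * C)) * (r * r) :=
                mul_le_mul_of_nonneg_left hrk h5
            _ = J * C * (2 * T * (L:ℝ) + 2) * r * r := by ring
  -- conclude measure zero
  refine le_antisymm ?_ zero_le
  refine ENNReal.le_of_forall_pos_le_add fun ε hε _ => ?_
  rw [zero_add]
  set r : ℝ := min (min r₀ 1 / 2) ((ε:ℝ) / (2 * K)) with hr
  have hε' : (0:ℝ) < ε := hε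
  have hr0 : 0 < r := lt_min (by positivity) (by positivity)
  have hrlt : r < min r₀ 1 := by
    calc r ≤ min r₀ 1 / 2 := min_le_left _ _
      _ < min r₀ 1 := by
          have : 0 < min r₀ 1 := lt_min hr₀ one_pos
          linarith
  have h1 : volume A ≤ ENNReal.ofReal (K * r) := key r ⟨hr0, hrlt⟩
  refine h1.trans ?_
  have h2 : K * r ≤ (ε:ℝ) := by
    have : r ≤ (ε:ℝ) / (2 * K) := min_le_right _ _
    have h3 : K * r ≤ K * ((ε:ℝ) / (2 * K)) := mul_le_mul_of_nonneg_left this hK0.le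
    have h4 : K * ((ε:ℝ) / (2 * K)) = (ε:ℝ) / 2 := by field_simp
    nlinarith
  calc ENNReal.ofReal (K * r) ≤ ENNReal.ofReal (ε:ℝ) := ENNReal.ofReal_le_ofReal h2
    _ = (ε : ENNReal) := ENNReal.ofReal_coe_nnreal
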